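/- Let t : ℤ → ℤ be the translation z ↦ z + 1. The subgroup of Sym(ℤ) generated by the 3-cycle (0 1 2) and the permutation (0 1)·t contains the group Alt(ℤ) of all even finitary permutations of ℤ. -/

import Mathlib

/-- The group of finitary permutations of `X`: those with finite support. -/
def FSym (X : Type*) : Subgroup (Equiv.Perm X) where
  carrier := {g | {x | g x ≠ x}.Finite}
  one_mem' := by simp
  mul_mem' := by
    intro a b ha hb
    refine (Set.Finite.union ha hb).subset fun x hx => ?_
    simp only [Set.mem_setOf_eq, Set.mem_union, Equiv.Perm.mul_apply] at hx ⊢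
    by_cases h : b x = x
    · left; rwa [h] at hx
    · right; exact h
  inv_mem' := by
    intro a ha
    refine ha.subset fun x hx => ?_
    simp only [Set.mem_setOf_eq] at hx ⊢
    intro h
    exact hx (Equiv.Perm.inv_eq_iff_eq.mpr h.symm)

/-- A permutation is even (finitary) if it is a product of an even number of transpositions. -/
def IsEvenPerm {X : Type*} [DecidableEq X] (g : Equiv.Perm X) : Prop :=
  ∃ l : List (Equiv.Perm X), (∀ τ ∈ l, τ.IsSwap) ∧ Even l.length ∧ g = l.prod

/-- A permutation is odd (finitary) if it is a product of an odd number of transpositions. -/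
def IsOddPerm {X : Type*} [DecidableEq X] (g : Equiv.Perm X) : Prop :=
  ∃ l : List (Equiv.Perm X), (∀ τ ∈ l, τ.IsSwap) ∧ Odd l.length ∧ g = l.prod

/-- `Alt(X)`: the group of even finitary permutations of `X`. -/
def AltGroup (X : Type*) [DecidableEq X] : Subgroup (Equiv.Perm X) where
  carrier := {g | IsEvenPerm g}
  one_mem' := ⟨[], by simp, by simp, by simp⟩
  mul_mem' := by
    rintro a b ⟨l₁, hs₁, he₁, hp₁⟩ ⟨l₂, hs₂, he₂, hp₂⟩
    refine ⟨l₁ ++ l₂, ?_, by simpa using he₁.add he₂, by rw [hp₁, hp₂, List.prod_append]⟩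
    intro τ hτ
    rcases List.mem_append.mp hτ with h | h
    exacts [hs₁ τ h, hs₂ τ h]
  inv_mem' := by
    rintro a ⟨l, hs, he, hp⟩
    refine ⟨(l.map fun x => x⁻¹).reverse, ?_, by simpa using he, ?_⟩
    · intro τ hτ
      simp only [List.mem_reverse, List.mem_map] at hτ
      obtain ⟨σ, hσ, rfl⟩ := hτ
      obtain ⟨x, y, hxy, rfl⟩ := hs σ hσ
      exact ⟨x, y, hxy, by simp⟩
    · rw [hp, List.prod_inv_reverse]



open Equiv Subgroup

private abbrev sP : Equiv.Perm ℤ := Equiv.swap 0 1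
private abbrev sgP : Equiv.Perm ℤ := Equiv.swap 0 2 * Equiv.swap 0 1
private abbrev tuP : Equiv.Perm ℤ := Equiv.addRight 1 * Equiv.swap 0 1
private abbrev HP : Subgroup (Equiv.Perm ℤ) :=
  Subgroup.closure {Equiv.swap (0 : ℤ) 2 * Equiv.swap 0 1,
    Equiv.addRight (1 : ℤ) * Equiv.swap 0 1}

private lemma hsg_mem : sgP ∈ HP := Subgroup.subset_closure (by left; rfl)
private lemma htu_mem : tuP ∈ HP := Subgroup.subset_closure (by right; rfl)

private lemma key1 : tuP * sP * tuP⁻¹ = sP * sgP := by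
  have l : tuP * sP * tuP⁻¹ = Equiv.swap (tuP 0) (tuP 1) :=
    (Equiv.swap_apply_apply _ 0 1).symm
  have r : sP * sgP = Equiv.swap (sP 0) (sP 2) := by
    rw [Equiv.swap_apply_apply, Equiv.swap_inv, mul_assoc]
  rw [l, r]
  norm_num [Equiv.Perm.mul_apply]
  exact Equiv.swap_comm _ _

private lemma key1' : tuP⁻¹ * (sP * sgP) = sP * tuP⁻¹ := by
  rw [← key1]; group

private lemma key1'' : sP * sgP * tuP = tuP * sP := by
  rw [← key1]; group

private lemma Rfwd (a b : ℤ) :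
    Equiv.swap (tuP a) (tuP b) * sP = tuP * (Equiv.swap a b * sP) * tuP⁻¹ * sgP⁻¹ := by
  rw [Equiv.swap_apply_apply]
  calc tuP * Equiv.swap a b * tuP⁻¹ * sP
      = tuP * Equiv.swap a b * (tuP⁻¹ * (sP * sgP)) * sgP⁻¹ := by group
    _ = tuP * Equiv.swap a b * (sP * tuP⁻¹) * sgP⁻¹ := by rw [key1']
    _ = tuP * (Equiv.swap a b * sP) * tuP⁻¹ * sgP⁻¹ := by group

private lemma Rbwd (a b : ℤ) :
    Equiv.swap (tuP⁻¹ a) (tuP⁻¹ b) * sP = tuP⁻¹ * (Equiv.swap a b * sP * sgP) * tuP := by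
  rw [Equiv.swap_apply_apply]
  calc tuP⁻¹ * Equiv.swap a b * (tuP⁻¹)⁻¹ * sP
      = tuP⁻¹ * Equiv.swap a b * (tuP * sP) := by group
    _ = tuP⁻¹ * Equiv.swap a b * (sP * sgP * tuP) := by rw [key1'']
    _ = tuP⁻¹ * (Equiv.swap a b * sP * sgP) * tuP := by group

private lemma tu_one : tuP 1 = 1 := by
  norm_num [Equiv.Perm.mul_apply]

private lemma tu_ge (m : ℤ) (h : 2 ≤ m) : tuP m = m + 1 := by
  simp [Equiv.Perm.mul_apply, Equiv.swap_apply_of_ne_of_ne (by omega : m ≠ 0) (by omega : m ≠ 1)]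

private lemma tuinv_one : tuP⁻¹ 1 = 1 := by
  rw [Equiv.Perm.inv_eq_iff_eq, tu_one]

private lemma tuinv_le (m : ℤ) (h : m ≤ 0) : tuP⁻¹ m = m - 1 := by
  rw [Equiv.Perm.inv_eq_iff_eq]
  simp [Equiv.Perm.mul_apply,
    Equiv.swap_apply_of_ne_of_ne (by omega : m - 1 ≠ 0) (by omega : m - 1 ≠ 1)]

private lemma base12 : Equiv.swap (1 : ℤ) 2 * sP = sgP⁻¹ := by
  have h := Equiv.swap_apply_apply sP 0 2
  have h00 : sP 0 = 1 := Equiv.swap_apply_left 0 1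
  have h02 : sP 2 = 2 := Equiv.swap_apply_of_ne_of_ne (by norm_num) (by norm_num)
  rw [h00, h02] at h
  rw [h]
  simp only [mul_inv_rev, Equiv.swap_inv]
  simp [mul_assoc, Equiv.swap_mul_self]

private lemma hD1up : ∀ m : ℤ, 2 ≤ m → Equiv.swap 1 m * sP ∈ HP := by
  intro m hm
  refine Int.le_induction (motive := fun x _ => Equiv.swap 1 x * sP ∈ HP) ?_ ?_ m hm
  · show Equiv.swap (1:ℤ) 2 * sP ∈ HP
    rw [base12]; exact inv_mem hsg_mem
  · intro n hn ih
    show Equiv.swap (1:ℤ) (n+1) * sP ∈ HP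
    have e := Rfwd 1 n
    rw [tu_one, tu_ge n hn] at e
    rw [e]
    exact mul_mem (mul_mem (mul_mem htu_mem ih) (inv_mem htu_mem)) (inv_mem hsg_mem)

private lemma hD1down : ∀ m : ℤ, m ≤ 0 → Equiv.swap 1 m * sP ∈ HP := by
  intro m hm
  refine Int.le_induction_down (motive := fun x _ => Equiv.swap 1 x * sP ∈ HP) ?_ ?_ m hm
  · show Equiv.swap (1:ℤ) 0 * sP ∈ HP
    rw [Equiv.swap_comm, Equiv.swap_mul_self]
    exact one_mem _
  · intro n hn ih
    show Equiv.swap (1:ℤ) (n-1) * sP ∈ HP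
    have e := Rbwd 1 n
    rw [tuinv_one, tuinv_le n hn] at e
    rw [e]
    exact mul_mem (mul_mem (inv_mem htu_mem) (mul_mem ih hsg_mem)) htu_mem

private lemma hD1 (m : ℤ) (hm : m ≠ 1) : Equiv.swap 1 m * sP ∈ HP := by
  rcases (by omega : m ≤ 0 ∨ 2 ≤ m) with h | h
  · exact hD1down m h
  · exact hD1up m h

private lemma hD (a b : ℤ) (hab : a ≠ b) : Equiv.swap a b * sP ∈ HP := by
  by_cases ha : a = 1
  · subst ha; exact hD1 b (Ne.symm hab)
  by_cases hb : b = 1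
  · subst hb; rw [Equiv.swap_comm]; exact hD1 a ha
  have e : Equiv.swap a b = Equiv.swap 1 a * Equiv.swap 1 b * (Equiv.swap 1 a)⁻¹ := by
    rw [← Equiv.swap_apply_apply, Equiv.swap_apply_left,
      Equiv.swap_apply_of_ne_of_ne hb (Ne.symm hab)]
  have e2 : Equiv.swap a b * sP
      = (Equiv.swap 1 a * sP) * (Equiv.swap 1 b * sP)⁻¹ * (Equiv.swap 1 a * sP) := by
    rw [e]
    simp only [mul_inv_rev, Equiv.swap_inv]
    simp [mul_assoc, Equiv.swap_mul_self]
  rw [e2]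
  exact mul_mem (mul_mem (hD1 a ha) (inv_mem (hD1 b hb))) (hD1 a ha)

private lemma prod_mem_HP : ∀ (n : ℕ) (l : List (Equiv.Perm ℤ)), l.length = 2 * n →
    (∀ p ∈ l, p.IsSwap) → l.prod ∈ HP := by
  intro n
  induction n with
  | zero =>
    intro l hl _
    have : l = [] := List.length_eq_zero_iff.mp (by omega)
    subst this
    simp only [List.prod_nil]
    exact one_mem _
  | succ n ih =>
    intro l hl hsw
    match l with
    | [] => simp at hl
    | [p] => simp only [List.length_cons, List.length_nil] at hl; omega
    | p :: q :: rest =>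
      simp only [List.length_cons] at hl
      obtain ⟨a, b, hab, rfl⟩ := hsw p (by simp)
      obtain ⟨c, d, hcd, rfl⟩ := hsw q (by simp)
      have hpq : Equiv.swap a b * Equiv.swap c d
          = (Equiv.swap a b * sP) * (Equiv.swap c d * sP)⁻¹ := by
        rw [mul_inv_rev, Equiv.swap_inv, Equiv.swap_inv]
        simp [mul_assoc, Equiv.swap_mul_self]
      have h1 : Equiv.swap a b * Equiv.swap c d ∈ HP := by
        rw [hpq]; exact mul_mem (hD a b hab) (inv_mem (hD c d hcd))
      have h2 : rest.prod ∈ HP := ih rest (by omega) fun p hp => hsw p (by simp [hp])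
      simpa [← mul_assoc] using mul_mem h1 h2

/-- Let `t : ℤ → ℤ` be `z ↦ z + 1`, `σ = (0 1 2)` the 3-cycle `0↦1↦2↦0`, and
`τ = (0 1)·t` (the transposition `(0 1)` followed by the translation `t`). Then the
subgroup of `Sym(ℤ)` generated by `σ` and `τ` contains `Alt(ℤ)`, the group of all
even finitary permutations of `ℤ`. -/
theorem alt_le_closure :
    AltGroup ℤ ≤
      Subgroup.closure {Equiv.swap (0 : ℤ) 2 * Equiv.swap 0 1,
        Equiv.addRight (1 : ℤ) * Equiv.swap 0 1} := by
  intro g hg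
  obtain ⟨l, hsw, ⟨n, hn⟩, rfl⟩ := hg
  exact prod_mem_HP n l (by omega) hsw
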